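/- Let σ be a full-dimensional simplicial rational cone in N_ℝ with N ≅ ℤ^d, and let σ^0 ⊆ σ ∩ N be a free submonoid isomorphic to ℕ^d such that every element of σ ∩ N has a positive multiple in σ^0. Then F = { m ∈ M ⊗ ℚ : ⟨m, n⟩ ∈ ℤ_{≥0} for all n ∈ σ^0 } is a free commutative monoid of rank d containing σ^∨ ∩ M as a submonoid close to F. -/

import Mathlib

/-- Let `σ` be a full-dimensional simplicial rational cone with
free-net `σ^0 ⊆ σ ∩ N` generated by the linearly independent lattice vectors
`η i` (so `σ^0 ≅ ℕ^d` and every element of `σ ∩ N` has a positive multiple in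
`σ^0`; in particular `σ` is the cone spanned by the `η i`). Then
`F = { m ∈ M ⊗ ℚ : ⟨m, n⟩ ∈ ℤ_{≥0} ∀ n ∈ σ^0 }` is free of rank `d` and
contains `P = σ^∨ ∩ M` as a submonoid close to `F`. -/
theorem stmt10 {d : ℕ} (η : Fin d → (Fin d → ℤ))
    (hlin : LinearIndependent ℚ fun i => fun j => (η i j : ℚ))
    (F P : AddSubmonoid (Fin d → ℚ))
    (hF : ∀ h : Fin d → ℚ, h ∈ F ↔
      ∀ s ∈ AddSubmonoid.closure (Set.range η),
        ∃ k : ℕ, ∑ j, h j * (s j : ℚ) = (k : ℚ))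
    (hP : ∀ h : Fin d → ℚ, h ∈ P ↔
      ((∃ m : Fin d → ℤ, ∀ j, h j = (m j : ℚ)) ∧ ∀ i, 0 ≤ ∑ j, h j * (η i j : ℚ))) :
    Nonempty (F ≃+ (Fin d → ℕ)) ∧ P ≤ F ∧ ∀ h ∈ F, ∃ n : ℕ, 0 < n ∧ n • h ∈ P := by
  classical
  set A : Matrix (Fin d) (Fin d) ℚ := Matrix.of (fun i j => (η i j : ℚ)) with hA
  have hAunit : IsUnit A := Matrix.linearIndependent_rows_iff_isUnit.mp hlin
  have hpair : ∀ (h : Fin d → ℚ) i, ∑ j, h j * (η i j : ℚ) = A.mulVec h i := by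
    intro h i
    simp [Matrix.mulVec, dotProduct, hA, mul_comm]
  -- F membership via generators
  have hFgen : ∀ h : Fin d → ℚ, h ∈ F ↔ ∀ i, ∃ k : ℕ, A.mulVec h i = (k : ℚ) := by
    intro h
    rw [hF]
    constructor
    · intro H i
      obtain ⟨k, hk⟩ := H (η i) (AddSubmonoid.subset_closure ⟨i, rfl⟩)
      exact ⟨k, by rw [← hpair]; exact hk⟩
    · intro H s hs
      induction hs using AddSubmonoid.closure_induction with
      | mem s hs =>
        obtain ⟨i, rfl⟩ := hs
        obtain ⟨k, hk⟩ := H i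
        exact ⟨k, by rw [hpair]; exact hk⟩
      | zero => exact ⟨0, by simp⟩
      | add s t _ _ hs ht =>
        obtain ⟨k, hk⟩ := hs
        obtain ⟨l, hl⟩ := ht
        refine ⟨k + l, ?_⟩
        push_cast
        rw [← hk, ← hl, ← Finset.sum_add_distrib]
        congr 1; ext j; simp only [Pi.add_apply]; push_cast; ring
  refine ⟨?_, ?_, ?_⟩
  · -- construct the AddEquiv
    have hinj : Function.Injective A.mulVec :=
      Matrix.mulVec_injective_iff_isUnit.mpr hAunit
    have hsurj : Function.Surjective A.mulVec :=
      Matrix.mulVec_surjective_iff_isUnit.mpr hAunit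
    let φ : F →+ (Fin d → ℕ) :=
      { toFun := fun h => fun i => (A.mulVec h.1 i).num.toNat
        map_zero' := by ext i; simp
        map_add' := by
          intro x y
          ext i
          obtain ⟨k, hk⟩ := (hFgen x.1).mp x.2 i
          obtain ⟨l, hl⟩ := (hFgen y.1).mp y.2 i
          have : A.mulVec (x.1 + y.1) i = ((k + l : ℕ) : ℚ) := by
            rw [Matrix.mulVec_add]; push_cast; simp [hk, hl]
          show (A.mulVec ((x + y : F) : Fin d → ℚ) i).num.toNat
              = (A.mulVec x.1 i).num.toNat + (A.mulVec y.1 i).num.toNat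
          simp only [AddSubmonoid.coe_add, this, hk, hl, Rat.num_natCast,
            Int.toNat_natCast] }
    refine ⟨AddEquiv.ofBijective φ ?_⟩
    constructor
    · intro x y hxy
      apply Subtype.ext
      apply hinj
      ext i
      obtain ⟨k, hk⟩ := (hFgen x.1).mp x.2 i
      obtain ⟨l, hl⟩ := (hFgen y.1).mp y.2 i
      have hx : (A.mulVec x.1 i).num.toNat = (A.mulVec y.1 i).num.toNat :=
        congr_fun hxy i
      rw [hk, hl] at hx
      simp only [Rat.num_natCast, Int.toNat_natCast] at hx
      rw [hk, hl, hx]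
    · intro k
      obtain ⟨h, hh⟩ := hsurj (fun i => (k i : ℚ))
      have hhF : h ∈ F := (hFgen h).mpr fun i => ⟨k i, by rw [hh]⟩
      refine ⟨⟨h, hhF⟩, ?_⟩
      ext i
      show (A.mulVec h i).num.toNat = k i
      rw [hh]
      simp
  · -- P ≤ F
    intro h hh
    obtain ⟨⟨m, hm⟩, hpos⟩ := (hP h).mp hh
    refine (hFgen h).mpr fun i => ?_
    have hint : A.mulVec h i = ((∑ j, m j * η i j : ℤ) : ℚ) := by
      rw [← hpair]; push_cast; congr 1; ext j; rw [hm j]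
    have h0 : (0 : ℚ) ≤ ((∑ j, m j * η i j : ℤ) : ℚ) := by
      rw [← hint, ← hpair]; exact hpos i
    have h0' : (0 : ℤ) ≤ ∑ j, m j * η i j := by exact_mod_cast h0
    exact ⟨(∑ j, m j * η i j).toNat, by rw [hint]; exact_mod_cast (Int.toNat_of_nonneg h0').symm⟩
  · -- closeness
    intro h hh
    have H := (hFgen h).mp hh
    refine ⟨∏ j, (h j).den, ?_, ?_⟩
    · exact Finset.prod_pos fun j _ => (h j).pos
    · rw [hP]
      constructor
      · refine ⟨fun j => (∏ j, (h j).den : ℤ) / (h j).den * (h j).num, fun j => ?_⟩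
        have hdvd : ((h j).den : ℤ) ∣ (∏ j, (h j).den : ℤ) := by
          exact_mod_cast Int.natCast_dvd_natCast.mpr (Finset.dvd_prod_of_mem _ (Finset.mem_univ j))
        obtain ⟨c, hc⟩ := hdvd
        have : (∏ j, (h j).den : ℤ) / (h j).den = c := by
          rw [hc]; exact Int.mul_ediv_cancel_left _ (by exact_mod_cast (h j).den_nz)
        simp only [Pi.smul_apply, this]
        have hprod : ((∏ j, (h j).den : ℕ) : ℚ) = ((h j).den : ℚ) * (c : ℚ) := by
          exact_mod_cast hc
        push_cast
        calc (∏ j, (h j).den : ℕ) • h j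
            = ((h j).den : ℚ) * (c : ℚ) * h j := by rw [nsmul_eq_mul, hprod]
          _ = (c : ℚ) * (h j * ((h j).den : ℚ)) := by ring
          _ = (c : ℚ) * ((h j).num : ℚ) := by rw [Rat.mul_den_eq_num]
      · intro i
        obtain ⟨k, hk⟩ := H i
        have : ∑ j, ((∏ j, (h j).den : ℕ) • h) j * (η i j : ℚ)
            = (∏ j, (h j).den : ℕ) * ∑ j, h j * (η i j : ℚ) := by
          rw [Finset.mul_sum]; congr 1; ext j; simp [nsmul_eq_mul]; ring
        rw [this, hpair, hk]
        positivity
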